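/- Dimension bound for partially smoothed conditional min-entropy (classical case): for a distribution P_{XZY} on finite X × Z × Y, H_min^{ε,T}(XZ|Ẏ)_P ≤ H_min^{ε,T}(X|Ẏ)_P + log₂|Z|. -/

import Mathlib

set_option linter.unusedSectionVars false

open scoped BigOperators
open Classical Real

noncomputable def Tv {α : Type*} [Fintype α] (P Q : α → ℝ) : ℝ :=
  (1/2) * ∑ x, |P x - Q x| + (1/2) * |∑ x, P x - ∑ x, Q x|

noncomputable def Dmax {α : Type*} [Fintype α] (P R : α → ℝ) : ℝ :=
  Real.logb 2 (sInf {l : ℝ | ∀ x, P x ≤ l * R x})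

noncomputable def Ds {α : Type*} [Fintype α] (ε : ℝ) (P R : α → ℝ) : ℝ :=
  sInf {a : ℝ | (∑ x, if (2:ℝ) ^ a * R x < P x then P x else 0) < ε}

noncomputable def Hmin {A Y : Type*} [Fintype A] [Fintype Y] (ε : ℝ) (P : A × Y → ℝ) : ℝ :=
  sSup {h : ℝ | ∃ P' : A × Y → ℝ, (∀ p, 0 ≤ P' p) ∧ (∑ p, P' p ≤ 1) ∧
    Tv P' P ≤ ε ∧ (∀ y, ∑ a, P' (a, y) ≤ ∑ a, P (a, y)) ∧
    h = - Dmax P' (fun p => ∑ a, P (a, p.2))}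

noncomputable def FeasSet {A Y : Type*} [Fintype A] [Fintype Y] (ε : ℝ) (P : A × Y → ℝ) : Set ℝ :=
  {h : ℝ | ∃ P' : A × Y → ℝ, (∀ p, 0 ≤ P' p) ∧ (∑ p, P' p ≤ 1) ∧
    Tv P' P ≤ ε ∧ (∀ y, ∑ a, P' (a, y) ≤ ∑ a, P (a, y)) ∧
    h = - Dmax P' (fun p => ∑ a, P (a, p.2))}
section aux
variable {A Y : Type*} [Fintype A] [Fintype Y]

lemma null_fiber {P' : A × Y → ℝ} {Q : Y → ℝ}
    (h0 : ∀ p, 0 ≤ P' p) (hc : ∀ y, ∑ a, P' (a, y) ≤ Q y)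
    {y : Y} (hy : Q y = 0) (a : A) : P' (a, y) = 0 := by
  have h1 : P' (a, y) ≤ ∑ a', P' (a', y) :=
    Finset.single_le_sum (fun i _ => h0 (i, y)) (Finset.mem_univ a)
  have h2 := hc y
  have h3 := h0 (a, y)
  linarith

lemma S_nonempty {P' : A × Y → ℝ} {Q : Y → ℝ}
    (h0 : ∀ p, 0 ≤ P' p) (hQ : ∀ y, 0 ≤ Q y) (hc : ∀ y, ∑ a, P' (a, y) ≤ Q y) :
    {l : ℝ | ∀ p, P' p ≤ l * Q p.2}.Nonempty := by
  refine ⟨∑ p, if Q p.2 = 0 then 0 else P' p / Q p.2, fun p => ?_⟩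
  by_cases hq : Q p.2 = 0
  · rw [hq, mul_zero]
    have := null_fiber h0 hc hq p.1
    simp only [Prod.mk.eta] at this
    exact this.le
  · have hqpos : 0 < Q p.2 := lt_of_le_of_ne (hQ p.2) (Ne.symm hq)
    have hterm : P' p / Q p.2 ≤ ∑ p', if Q p'.2 = 0 then 0 else P' p' / Q p'.2 := by
      have h := Finset.single_le_sum
        (f := fun p' : A × Y => if Q p'.2 = 0 then 0 else P' p' / Q p'.2)
        (fun i _ => by
          by_cases h : Q i.2 = 0
          · simp [h]
          · simp only [h, if_false]
            exact div_nonneg (h0 i) (hQ i.2))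
        (Finset.mem_univ p)
      simpa [hq] using h
    calc P' p = (P' p / Q p.2) * Q p.2 := by field_simp
    _ ≤ _ := mul_le_mul_of_nonneg_right hterm (hQ p.2)

lemma S_lb {P' : A × Y → ℝ} {Q : Y → ℝ} (h0 : ∀ p, 0 ≤ P' p)
    (a₀ : A) {y₀ : Y} (hy₀ : 0 < Q y₀) :
    ∀ l ∈ {l : ℝ | ∀ p, P' p ≤ l * Q p.2}, 0 ≤ l := by
  intro l hl
  have h1 := hl (a₀, y₀)
  have h2 := h0 (a₀, y₀)
  nlinarith

lemma sInf_S_zero {P' : A × Y → ℝ} {Q : Y → ℝ} (h0 : ∀ p, 0 ≤ P' p)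
    (a₀ : A) {y₀ : Y} (hy₀ : 0 < Q y₀) (hP' : ∀ p, P' p = 0) :
    sInf {l : ℝ | ∀ p, P' p ≤ l * Q p.2} = 0 := by
  have hmem : (0 : ℝ) ∈ {l : ℝ | ∀ p, P' p ≤ l * Q p.2} := by
    intro p; rw [hP' p, zero_mul]
  have hlb : ∀ l ∈ {l : ℝ | ∀ p, P' p ≤ l * Q p.2}, (0:ℝ) ≤ l := S_lb h0 a₀ hy₀
  exact le_antisymm (csInf_le ⟨0, fun l hl => hlb l hl⟩ hmem) (le_csInf ⟨0, hmem⟩ hlb)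

lemma sInf_S_pos {P' : A × Y → ℝ} {Q : Y → ℝ}
    (h0 : ∀ p, 0 ≤ P' p) (hQ : ∀ y, 0 ≤ Q y) (hc : ∀ y, ∑ a, P' (a, y) ≤ Q y)
    {p₀ : A × Y} (hp₀ : 0 < P' p₀) :
    0 < sInf {l : ℝ | ∀ p, P' p ≤ l * Q p.2} := by
  have hq₀ : 0 < Q p₀.2 := by
    rcases (hQ p₀.2).eq_or_lt with h | h
    · exfalso
      have := null_fiber h0 hc h.symm p₀.1
      simp only [Prod.mk.eta] at this
      exact hp₀.ne' this
    · exact h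
  have hlb : ∀ l ∈ {l : ℝ | ∀ p, P' p ≤ l * Q p.2}, P' p₀ / Q p₀.2 ≤ l := by
    intro l hl
    have := hl p₀
    exact (div_le_iff₀ hq₀).2 (by linarith)
  have := le_csInf (S_nonempty h0 hQ hc) hlb
  exact lt_of_lt_of_le (div_pos hp₀ hq₀) this

lemma reindexXZY {X Z : Type*} [Fintype X] [Fintype Z] (f : (X × Z) × Y → ℝ) :
    ∑ p, f p = ∑ q : X × Y, ∑ z, f ((q.1, z), q.2) := by
  rw [Fintype.sum_prod_type, Fintype.sum_prod_type]
  simp only [Fintype.sum_prod_type]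
  exact Finset.sum_congr rfl fun x _ => Finset.sum_comm

end aux

section setup
variable {X Z Y : Type*} [Fintype X] [Fintype Z] [Fintype Y]

lemma sum_swap_XZY (P : (X × Z) × Y → ℝ) :
    ∑ p, P p = ∑ y, ∑ a : X × Z, P (a, y) := by
  rw [Fintype.sum_prod_type]
  exact Finset.sum_comm

lemma setup_facts (P : (X × Z) × Y → ℝ) (hP : ∀ p, 0 ≤ P p) (hP1 : ∑ p, P p = 1) :
    Nonempty X ∧ Nonempty Z ∧ Nonempty Y ∧ ∃ y₀, 0 < ∑ a : X × Z, P (a, y₀) := by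
  have hne : Nonempty ((X × Z) × Y) := by
    by_contra h
    haveI : IsEmpty ((X × Z) × Y) := not_nonempty_iff.mp h
    rw [Finset.univ_eq_empty, Finset.sum_empty] at hP1
    norm_num at hP1
  obtain ⟨p⟩ := hne
  refine ⟨⟨p.1.1⟩, ⟨p.1.2⟩, ⟨p.2⟩, ?_⟩
  by_contra h
  push_neg at h
  have hz : ∀ y, ∑ a : X × Z, P (a, y) = 0 := fun y =>
    le_antisymm (h y) (Finset.sum_nonneg fun a _ => hP (a, y))
  rw [sum_swap_XZY] at hP1
  simp only [hz, Finset.sum_const_zero] at hP1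
  norm_num at hP1

end setup

section mainlemmas
variable {X Z Y : Type*} [Fintype X] [Fintype Z] [Fintype Y]

lemma lemmaB (P : (X × Z) × Y → ℝ) (ε : ℝ) (hP : ∀ p, 0 ≤ P p) (hP1 : ∑ p, P p = 1) :
    ∀ h ∈ FeasSet ε P, ∃ h' ∈ FeasSet ε (fun q : X × Y => ∑ z, P ((q.1, z), q.2)),
      h ≤ h' + Real.logb 2 (Fintype.card Z) := by
  obtain ⟨hX, hZ, hY, y₀, hy₀⟩ := setup_facts P hP hP1
  haveI := hX; haveI := hZ; haveI := hY
  set Q : Y → ℝ := fun y => ∑ a : X × Z, P (a, y) with hQdef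
  set Pm : X × Y → ℝ := fun q => ∑ z, P ((q.1, z), q.2) with hPmdef
  have hQ0 : ∀ y, 0 ≤ Q y := fun y => Finset.sum_nonneg fun a _ => hP (a, y)
  have hQmarg : ∀ y, ∑ x, Pm (x, y) = Q y := by
    intro y
    simp only [hPmdef, hQdef]
    rw [Fintype.sum_prod_type]
  have hcardZ : (0:ℝ) < (Fintype.card Z : ℝ) := by
    exact_mod_cast Fintype.card_pos (α := Z)
  have hlogZ : (0:ℝ) ≤ Real.logb 2 (Fintype.card Z) :=
    Real.logb_nonneg one_lt_two (by exact_mod_cast Fintype.card_pos (α := Z))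
  rintro h ⟨P', h0, hsum, hTv, hmarg, rfl⟩
  set P'' : X × Y → ℝ := fun q => ∑ z, P' ((q.1, z), q.2) with hP''def
  have h0'' : ∀ q, 0 ≤ P'' q := fun q => Finset.sum_nonneg fun z _ => h0 _
  have hsum'' : ∑ q, P'' q = ∑ p, P' p := (reindexXZY P').symm
  have hmargQ' : ∀ y, ∑ a : X × Z, P' (a, y) ≤ Q y := hmarg
  have hmarg'' : ∀ y, ∑ x, P'' (x, y) ≤ ∑ x, Pm (x, y) := by
    intro y
    rw [hQmarg y]
    have he : ∑ x, P'' (x, y) = ∑ a : X × Z, P' (a, y) := by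
      simp only [hP''def]; rw [Fintype.sum_prod_type]
    rw [he]; exact hmargQ' y
  have hmargQ'' : ∀ y, ∑ x, P'' (x, y) ≤ Q y := fun y => (hmarg'' y).trans_eq (hQmarg y)
  have hTv'' : Tv P'' Pm ≤ ε := by
    have habs : ∑ q, |P'' q - Pm q| ≤ ∑ p, |P' p - P p| := by
      rw [reindexXZY (fun p => |P' p - P p|)]
      apply Finset.sum_le_sum
      intro q _
      have he : P'' q - Pm q = ∑ z, (P' ((q.1, z), q.2) - P ((q.1, z), q.2)) := by
        simp only [hP''def, hPmdef]; rw [Finset.sum_sub_distrib]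
      rw [he]
      exact Finset.abs_sum_le_sum_abs _ _
    have htot : ∑ q, Pm q = ∑ p, P p := (reindexXZY P).symm
    unfold Tv at hTv ⊢
    rw [hsum'', htot]
    linarith
  refine ⟨-Dmax P'' (fun q => ∑ x, Pm (x, q.2)),
    ⟨P'', h0'', by rw [hsum'']; exact hsum, hTv'', hmarg'', rfl⟩, ?_⟩
  have hD1 : Dmax P' (fun p => ∑ a, P (a, p.2))
      = Real.logb 2 (sInf {l : ℝ | ∀ p, P' p ≤ l * Q p.2}) := rfl
  have hseteq : {l : ℝ | ∀ q : X × Y, P'' q ≤ l * ∑ x, Pm (x, q.2)}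
      = {l : ℝ | ∀ q : X × Y, P'' q ≤ l * Q q.2} := by
    ext l
    exact forall_congr' fun q => by rw [hQmarg q.2]
  have hD2 : Dmax P'' (fun q => ∑ x, Pm (x, q.2))
      = Real.logb 2 (sInf {l : ℝ | ∀ q : X × Y, P'' q ≤ l * Q q.2}) := by
    show Real.logb 2 (sInf {l : ℝ | ∀ q : X × Y, P'' q ≤ l * ∑ x, Pm (x, q.2)}) = _
    rw [hseteq]
  rw [hD1, hD2]
  by_cases hpos : ∃ p₀, 0 < P' p₀
  · obtain ⟨p₀, hp₀⟩ := hpos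
    have hS1pos : 0 < sInf {l : ℝ | ∀ p, P' p ≤ l * Q p.2} :=
      sInf_S_pos h0 hQ0 hmargQ' hp₀
    have hq₀ : 0 < P'' (p₀.1.1, p₀.2) := by
      have hle : P' p₀ ≤ P'' (p₀.1.1, p₀.2) := by
        have := Finset.single_le_sum (f := fun z => P' ((p₀.1.1, z), p₀.2))
          (fun z _ => h0 _) (Finset.mem_univ p₀.1.2)
        simpa using this
      linarith
    have hS2pos : 0 < sInf {l : ℝ | ∀ q : X × Y, P'' q ≤ l * Q q.2} :=
      sInf_S_pos h0'' hQ0 hmargQ'' (p₀ := (p₀.1.1, p₀.2)) hq₀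
    have hmul : ∀ l ∈ {l : ℝ | ∀ p, P' p ≤ l * Q p.2},
        (Fintype.card Z : ℝ) * l ∈ {l : ℝ | ∀ q : X × Y, P'' q ≤ l * Q q.2} := by
      intro l hl q
      calc P'' q ≤ ∑ _z : Z, l * Q q.2 :=
            Finset.sum_le_sum fun z _ => hl ((q.1, z), q.2)
      _ = (Fintype.card Z : ℝ) * l * Q q.2 := by
            rw [Finset.sum_const, Finset.card_univ, nsmul_eq_mul]; ring
    have hbdd2 : BddBelow {l : ℝ | ∀ q : X × Y, P'' q ≤ l * Q q.2} :=
      ⟨0, fun l hl => S_lb h0'' (Classical.arbitrary X) hy₀ l hl⟩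
    have hle : sInf {l : ℝ | ∀ q : X × Y, P'' q ≤ l * Q q.2}
        ≤ (Fintype.card Z : ℝ) * sInf {l : ℝ | ∀ p, P' p ≤ l * Q p.2} := by
      have h1 : ∀ l ∈ {l : ℝ | ∀ p, P' p ≤ l * Q p.2},
          sInf {l : ℝ | ∀ q : X × Y, P'' q ≤ l * Q q.2} / (Fintype.card Z : ℝ) ≤ l := by
        intro l hl
        rw [div_le_iff₀ hcardZ]
        have h2 := csInf_le hbdd2 (hmul l hl)
        linarith
      have h2 := le_csInf (S_nonempty h0 hQ0 hmargQ') h1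
      rw [div_le_iff₀ hcardZ] at h2
      linarith
    have hlog := Real.logb_le_logb_of_le one_lt_two hS2pos hle
    rw [Real.logb_mul (ne_of_gt hcardZ) (ne_of_gt hS1pos)] at hlog
    linarith
  · push_neg at hpos
    have hP'0 : ∀ p, P' p = 0 := fun p => le_antisymm (hpos p) (h0 p)
    have hP''0 : ∀ q : X × Y, P'' q = 0 := by
      intro q; simp only [hP''def]
      exact Finset.sum_eq_zero fun z _ => hP'0 _
    rw [sInf_S_zero h0 (Classical.arbitrary (X × Z)) hy₀ hP'0,
        sInf_S_zero h0'' (Classical.arbitrary X) hy₀ hP''0, Real.logb_zero]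
    linarith

end mainlemmas

section lemA
variable {A Y : Type*} [Fintype A] [Fintype Y]

lemma lemmaA (R : A × Y → ℝ) (ε : ℝ) (hR : ∀ p, 0 ≤ R p) (hR1 : ∑ p, R p = 1)
    (hε0 : 0 ≤ ε) : ∃ h ∈ FeasSet ε R, 0 ≤ h := by
  have hne : Nonempty (A × Y) := by
    by_contra h
    haveI : IsEmpty (A × Y) := not_nonempty_iff.mp h
    rw [Finset.univ_eq_empty, Finset.sum_empty] at hR1
    norm_num at hR1
  obtain ⟨p₁⟩ := hne
  haveI : Nonempty A := ⟨p₁.1⟩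
  set Q : Y → ℝ := fun y => ∑ a, R (a, y) with hQdef
  have hQ0 : ∀ y, 0 ≤ Q y := fun y => Finset.sum_nonneg fun a _ => hR (a, y)
  have hy₀ : ∃ y₀, 0 < Q y₀ := by
    by_contra h
    push_neg at h
    have hz : ∀ y, Q y = 0 := fun y => le_antisymm (h y) (hQ0 y)
    have : ∑ p, R p = ∑ y, ∑ a, R (a, y) := by
      rw [Fintype.sum_prod_type]; exact Finset.sum_comm
    rw [this] at hR1
    simp only [← hQdef] at hR1
    simp only [hz, Finset.sum_const_zero] at hR1
    norm_num at hR1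
  obtain ⟨y₀, hy₀⟩ := hy₀
  have hTvRR : Tv R R ≤ ε := by
    unfold Tv; simp only [sub_self, abs_zero, Finset.sum_const_zero]
    norm_num; exact hε0
  refine ⟨-Dmax R (fun p => ∑ a, R (a, p.2)), ⟨R, hR, hR1.le, hTvRR, fun y => le_refl _, rfl⟩, ?_⟩
  have hD : Dmax R (fun p => ∑ a, R (a, p.2))
      = Real.logb 2 (sInf {l : ℝ | ∀ p, R p ≤ l * Q p.2}) := rfl
  rw [hD]
  have hmem1 : (1:ℝ) ∈ {l : ℝ | ∀ p, R p ≤ l * Q p.2} := by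
    intro p
    rw [one_mul]
    have := Finset.single_le_sum (f := fun a => R (a, p.2)) (fun a _ => hR (a, p.2))
      (Finset.mem_univ p.1)
    simpa using this
  have hlb : ∀ l ∈ {l : ℝ | ∀ p, R p ≤ l * Q p.2}, (0:ℝ) ≤ l :=
    S_lb hR (Classical.arbitrary A) hy₀
  have h1 : sInf {l : ℝ | ∀ p, R p ≤ l * Q p.2} ≤ 1 :=
    csInf_le ⟨0, fun l hl => hlb l hl⟩ hmem1
  have h2 : 0 ≤ sInf {l : ℝ | ∀ p, R p ≤ l * Q p.2} :=
    le_csInf ⟨1, hmem1⟩ hlb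
  have := Real.logb_nonpos (one_lt_two) h2 h1
  linarith

end lemA

section lemC
variable {X Z Y : Type*} [Fintype X] [Fintype Z] [Fintype Y]

lemma lemmaC (P : (X × Z) × Y → ℝ) (ε : ℝ) (hP : ∀ p, 0 ≤ P p) (hP1 : ∑ p, P p = 1) :
    ∀ h' ∈ FeasSet ε (fun q : X × Y => ∑ z, P ((q.1, z), q.2)),
      ∃ h ∈ FeasSet ε P, h' ≤ h := by
  obtain ⟨hX, hZ, hY, y₀, hy₀⟩ := setup_facts P hP hP1
  haveI := hX; haveI := hZ; haveI := hY
  set Q : Y → ℝ := fun y => ∑ a : X × Z, P (a, y) with hQdef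
  set Pm : X × Y → ℝ := fun q => ∑ z, P ((q.1, z), q.2) with hPmdef
  have hQ0 : ∀ y, 0 ≤ Q y := fun y => Finset.sum_nonneg fun a _ => hP (a, y)
  have hQmarg : ∀ y, ∑ x, Pm (x, y) = Q y := by
    intro y
    simp only [hPmdef, hQdef]
    rw [Fintype.sum_prod_type]
  have hcardZ : (0:ℝ) < (Fintype.card Z : ℝ) := by
    exact_mod_cast Fintype.card_pos (α := Z)
  have hcardZ1 : (1:ℝ) ≤ (Fintype.card Z : ℝ) := by
    exact_mod_cast Fintype.card_pos (α := Z)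
  rintro h ⟨P'', h0'', hsum'', hTv'', hmarg'', rfl⟩
  have hmargQ'' : ∀ y, ∑ x, P'' (x, y) ≤ Q y :=
    fun y => (hmarg'' y).trans_eq (hQmarg y)
  have hPmnn : ∀ q : X × Y, 0 ≤ Pm q := fun q => Finset.sum_nonneg fun z _ => hP _
  set P' : (X × Z) × Y → ℝ := fun p =>
    if Pm (p.1.1, p.2) = 0 then P'' (p.1.1, p.2) / (Fintype.card Z : ℝ)
    else P'' (p.1.1, p.2) * P p / Pm (p.1.1, p.2) with hP'def
  have hPlePm : ∀ p : (X × Z) × Y, P p ≤ Pm (p.1.1, p.2) := by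
    intro p
    have := Finset.single_le_sum (f := fun z => P ((p.1.1, z), p.2))
      (fun z _ => hP _) (Finset.mem_univ p.1.2)
    simpa using this
  have hPz : ∀ p : (X × Z) × Y, Pm (p.1.1, p.2) = 0 → P p = 0 := by
    intro p hpm
    exact le_antisymm ((hPlePm p).trans_eq hpm) (hP p)
  have h0' : ∀ p, 0 ≤ P' p := by
    intro p
    simp only [hP'def]
    split
    · exact div_nonneg (h0'' _) hcardZ.le
    · exact div_nonneg (mul_nonneg (h0'' _) (hP p)) (hPmnn _)
  have hfiber : ∀ q : X × Y, ∑ z, P' ((q.1, z), q.2) = P'' q := by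
    rintro ⟨x, y⟩
    by_cases hpm : Pm (x, y) = 0
    · have he : ∀ z : Z, P' ((x, z), y) = P'' (x, y) / (Fintype.card Z : ℝ) := fun z => by
        simp only [hP'def, hpm, if_true]
      rw [Finset.sum_congr rfl fun z _ => he z, Finset.sum_const, Finset.card_univ,
        nsmul_eq_mul]
      field_simp
    · have he : ∀ z : Z, P' ((x, z), y)
          = P ((x, z), y) * (P'' (x, y) / Pm (x, y)) := fun z => by
        simp only [hP'def, hpm, if_false]; ring
      rw [Finset.sum_congr rfl fun z _ => he z, ← Finset.sum_mul]
      have hsz : ∑ z, P ((x, z), y) = Pm (x, y) := rfl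
      rw [hsz]
      field_simp
  have hsum' : ∑ p, P' p = ∑ q, P'' q := by
    rw [reindexXZY P']
    exact Finset.sum_congr rfl fun q _ => hfiber q
  have hmargQ' : ∀ y, ∑ a : X × Z, P' (a, y) ≤ Q y := by
    intro y
    have he : ∑ a : X × Z, P' (a, y) = ∑ x, P'' (x, y) := by
      rw [Fintype.sum_prod_type]
      exact Finset.sum_congr rfl fun x _ => hfiber (x, y)
    rw [he]
    exact hmargQ'' y
  have hTv' : Tv P' P ≤ ε := by
    have habs : ∑ p, |P' p - P p| = ∑ q, |P'' q - Pm q| := by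
      rw [reindexXZY (fun p => |P' p - P p|)]
      refine Finset.sum_congr rfl ?_
      rintro ⟨x, y⟩ _
      by_cases hpm : Pm (x, y) = 0
      · have he : ∀ z : Z, |P' ((x, z), y) - P ((x, z), y)|
            = P'' (x, y) / (Fintype.card Z : ℝ) := fun z => by
          rw [hPz ((x, z), y) hpm]
          simp only [hP'def, hpm, if_true, sub_zero]
          exact abs_of_nonneg (div_nonneg (h0'' _) hcardZ.le)
        rw [Finset.sum_congr rfl fun z _ => he z, Finset.sum_const, Finset.card_univ,
          nsmul_eq_mul, hpm, sub_zero, abs_of_nonneg (h0'' (x, y))]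
        field_simp
      · have hpmpos : 0 < Pm (x, y) := lt_of_le_of_ne (hPmnn (x, y)) (Ne.symm hpm)
        have he : ∀ z : Z, |P' ((x, z), y) - P ((x, z), y)|
            = P ((x, z), y) * (|P'' (x, y) - Pm (x, y)| / Pm (x, y)) := fun z => by
          have h1 : P' ((x, z), y) - P ((x, z), y)
              = P ((x, z), y) * ((P'' (x, y) - Pm (x, y)) / Pm (x, y)) := by
            simp only [hP'def, hpm, if_false]
            field_simp
          rw [h1, abs_mul, abs_of_nonneg (hP ((x, z), y)), abs_div,
            abs_of_pos hpmpos]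
        rw [Finset.sum_congr rfl fun z _ => he z, ← Finset.sum_mul]
        have hsz : ∑ z, P ((x, z), y) = Pm (x, y) := rfl
        rw [hsz]
        field_simp
    have htot : ∑ q, Pm q = ∑ p, P p := (reindexXZY P).symm
    unfold Tv at hTv'' ⊢
    rw [habs, hsum', ← htot]
    exact hTv''
  refine ⟨-Dmax P' (fun p => ∑ a, P (a, p.2)),
    ⟨P', h0', by rw [hsum']; exact hsum'', hTv', hmargQ', rfl⟩, ?_⟩
  have hD1 : Dmax P' (fun p => ∑ a, P (a, p.2))
      = Real.logb 2 (sInf {l : ℝ | ∀ p, P' p ≤ l * Q p.2}) := rfl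
  have hsetsymm : {l : ℝ | ∀ q : X × Y, P'' q ≤ l * ∑ x, Pm (x, q.2)}
      = {l : ℝ | ∀ q : X × Y, P'' q ≤ l * Q q.2} := by
    ext l
    exact forall_congr' fun q => by rw [hQmarg q.2]
  have hD2 : Dmax P'' (fun q => ∑ x, Pm (x, q.2))
      = Real.logb 2 (sInf {l : ℝ | ∀ q : X × Y, P'' q ≤ l * Q q.2}) := by
    show Real.logb 2 (sInf {l : ℝ | ∀ q : X × Y, P'' q ≤ l * ∑ x, Pm (x, q.2)}) = _
    rw [hsetsymm]
  rw [hD1, hD2]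
  have hle'' : ∀ p : (X × Z) × Y, P' p ≤ P'' (p.1.1, p.2) := by
    intro p
    simp only [hP'def]
    split
    · exact div_le_self (h0'' _) hcardZ1
    · rename_i hpm
      have hpmpos : 0 < Pm (p.1.1, p.2) := lt_of_le_of_ne (hPmnn _) (Ne.symm hpm)
      rw [mul_div_assoc]
      exact mul_le_of_le_one_right (h0'' _) ((div_le_one hpmpos).2 (hPlePm p))
  have hsub : {l : ℝ | ∀ q : X × Y, P'' q ≤ l * Q q.2}
      ⊆ {l : ℝ | ∀ p, P' p ≤ l * Q p.2} := by
    intro l hl p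
    exact (hle'' p).trans (hl (p.1.1, p.2))
  by_cases hpos : ∃ q₀ : X × Y, 0 < P'' q₀
  · obtain ⟨q₀, hq₀⟩ := hpos
    have hS2pos : 0 < sInf {l : ℝ | ∀ q : X × Y, P'' q ≤ l * Q q.2} :=
      sInf_S_pos h0'' hQ0 hmargQ'' hq₀
    have hz₀ : ∃ z₀, 0 < P' ((q₀.1, z₀), q₀.2) := by
      by_contra hc
      push_neg at hc
      have : ∑ z, P' ((q₀.1, z), q₀.2) ≤ 0 :=
        Finset.sum_nonpos fun z _ => hc z
      rw [hfiber q₀] at this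
      linarith
    obtain ⟨z₀, hz₀⟩ := hz₀
    have hS1pos : 0 < sInf {l : ℝ | ∀ p, P' p ≤ l * Q p.2} :=
      sInf_S_pos h0' hQ0 hmargQ' (p₀ := ((q₀.1, z₀), q₀.2)) hz₀
    have hbdd1 : BddBelow {l : ℝ | ∀ p, P' p ≤ l * Q p.2} :=
      ⟨0, fun l hl => S_lb h0' (Classical.arbitrary (X × Z)) hy₀ l hl⟩
    have hle : sInf {l : ℝ | ∀ p, P' p ≤ l * Q p.2}
        ≤ sInf {l : ℝ | ∀ q : X × Y, P'' q ≤ l * Q q.2} :=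
      csInf_le_csInf hbdd1 (S_nonempty h0'' hQ0 hmargQ'') hsub
    have hlog := Real.logb_le_logb_of_le one_lt_two hS1pos hle
    linarith
  · push_neg at hpos
    have hP''0 : ∀ q : X × Y, P'' q = 0 := fun q => le_antisymm (hpos q) (h0'' q)
    have hP'0 : ∀ p, P' p = 0 := fun p =>
      le_antisymm ((hle'' p).trans_eq (hP''0 _)) (h0' p)
    rw [sInf_S_zero h0' (Classical.arbitrary (X × Z)) hy₀ hP'0,
        sInf_S_zero h0'' (Classical.arbitrary X) hy₀ hP''0]

end lemC

theorem stmt14 {X Z Y : Type*} [Fintype X] [Fintype Z] [Fintype Y]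
    (P : (X × Z) × Y → ℝ) (ε : ℝ)
    (hP : ∀ p, 0 ≤ P p) (hP1 : ∑ p, P p = 1)
    (hε0 : 0 ≤ ε) (hε1 : ε ≤ 1) :
    Hmin ε P ≤ Hmin ε (fun q : X × Y => ∑ z, P ((q.1, z), q.2))
      + Real.logb 2 (Fintype.card Z) := by
  obtain ⟨hX, hZ, hY, y₀, hy₀⟩ := setup_facts P hP hP1
  haveI := hX; haveI := hZ; haveI := hY
  have hlogZ : (0:ℝ) ≤ Real.logb 2 (Fintype.card Z) :=
    Real.logb_nonneg one_lt_two (by exact_mod_cast Fintype.card_pos (α := Z))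
  have hmarg1 : ∑ q : X × Y, (fun q : X × Y => ∑ z, P ((q.1, z), q.2)) q = 1 :=
    (reindexXZY P).symm.trans hP1
  obtain ⟨h₀, h₀mem, h₀nn⟩ :=
    lemmaA (fun q : X × Y => ∑ z, P ((q.1, z), q.2)) ε
      (fun q => Finset.sum_nonneg fun z _ => hP _) hmarg1 hε0
  have hB := lemmaB P ε hP hP1
  have hC := lemmaC P ε hP hP1
  have hrw1 : Hmin ε P = sSup (FeasSet ε P) := rfl
  have hrw2 : Hmin ε (fun q : X × Y => ∑ z, P ((q.1, z), q.2))
      = sSup (FeasSet ε (fun q : X × Y => ∑ z, P ((q.1, z), q.2))) := rfl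
  rw [hrw1, hrw2]
  have hMnn : 0 ≤ sSup (FeasSet ε (fun q : X × Y => ∑ z, P ((q.1, z), q.2))) := by
    by_cases hbdd : BddAbove (FeasSet ε (fun q : X × Y => ∑ z, P ((q.1, z), q.2)))
    · exact h₀nn.trans (le_csSup hbdd h₀mem)
    · rw [Real.sSup_of_not_bddAbove hbdd]
  by_cases hbdd : BddAbove (FeasSet ε (fun q : X × Y => ∑ z, P ((q.1, z), q.2)))
  · apply Real.sSup_le
    · intro h hmem
      obtain ⟨h', h'mem, hle⟩ := hB h hmem
      exact hle.trans (add_le_add_left (le_csSup hbdd h'mem) _)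
    · linarith
  · have hnb : ¬ BddAbove (FeasSet ε P) := by
      rintro ⟨b, hb⟩
      apply hbdd
      refine ⟨b, fun h' h'mem => ?_⟩
      obtain ⟨h, hmem, hle⟩ := hC h' h'mem
      exact hle.trans (hb hmem)
    rw [Real.sSup_of_not_bddAbove hnb]
    linarith
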